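/- For the function f(x,y) = (1/x)(1/y) for x,y ≥ 1 and f = 0 otherwise, the KP-Fourier transform satisfies ℱ(f)(ξ, η) = Γ(0, iξ) Γ(0, iη) for all ξ ≠ 0, η ≠ 0, where Γ(0, z) = ∫_z^∞ e^{−t}/t dt is the upper incomplete Gamma function; i.e., lim_{b,d→∞} ∫_1^b ∫_1^d (1/(t₁ t₂)) e^{−i(ξ t₁ + η t₂)} dt₁ dt₂ = (∫_1^∞ e^{−iξt}/t dt)(∫_1^∞ e^{−iηt}/t dt). -/

import Mathlib

open Set Filter MeasureTheory Real
open scoped Topology ENNReal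

noncomputable section

/-- Sum of absolute second-order rectangular increments of `f` over the grid `x`, `y`. -/
def vitaliSum (f : ℝ → ℝ → ℝ) (x y : ℕ → ℝ) (n m : ℕ) : ℝ :=
  ∑ i ∈ Finset.range n, ∑ j ∈ Finset.range m,
    |f (x (i+1)) (y (j+1)) - f (x i) (y (j+1)) - f (x (i+1)) (y j) + f (x i) (y j)|

/-- Vitali variation of `f` over a set `Q ⊆ ℝ²`: the supremum, over compact rectangles
contained in `Q` and partitions of them, of the sum of absolute rectangular increments. -/
def vitaliVar (f : ℝ → ℝ → ℝ) (Q : Set (ℝ × ℝ)) : ℝ≥0∞ :=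
  ⨆ (n : ℕ) (m : ℕ) (x : ℕ → ℝ) (y : ℕ → ℝ)
    (_ : ∀ i < n, x i < x (i+1)) (_ : ∀ j < m, y j < y (j+1))
    (_ : Set.Icc (x 0) (x n) ×ˢ Set.Icc (y 0) (y m) ⊆ Q),
    ENNReal.ofReal (vitaliSum f x y n m)

/-- Bounded variation in the sense of Vitali over `ℝ²`. -/
def BVV (f : ℝ → ℝ → ℝ) : Prop := vitaliVar f Set.univ < ⊤

/-- Bounded variation in the sense of Hardy over `ℝ²`. -/
def BVH (f : ℝ → ℝ → ℝ) : Prop :=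
  BVV f ∧ (∀ y, BoundedVariationOn (fun s => f s y) Set.univ) ∧
    (∀ x, BoundedVariationOn (fun s => f x s) Set.univ)

/-- The space `BV_{||0||}(ℝ²)`: Vitali bounded variation and vanishing as `‖(x,y)‖ → ∞`. -/
def BVzero (f : ℝ → ℝ → ℝ) : Prop :=
  BVV f ∧ Tendsto (fun p : ℝ × ℝ => f p.1 p.2) (cocompact (ℝ × ℝ)) (𝓝 0)

/-- `x`, `y` form a partition of `[a,b] × [c,d]` with `n`, resp. `m`, subintervals. -/
def IsPartition (x y : ℕ → ℝ) (n m : ℕ) (a b c d : ℝ) : Prop :=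
  x 0 = a ∧ x n = b ∧ y 0 = c ∧ y m = d ∧
    (∀ i < n, x i < x (i+1)) ∧ (∀ j < m, y j < y (j+1))

/-- The tags `(ξ i j, η i j)` belong to the corresponding subrectangles. -/
def Tags (x y : ℕ → ℝ) (ξ η : ℕ → ℕ → ℝ) (n m : ℕ) : Prop :=
  ∀ i < n, ∀ j < m,
    ξ i j ∈ Set.Icc (x i) (x (i+1)) ∧ η i j ∈ Set.Icc (y j) (y (j+1))

/-- Riemann–Stieltjes sum of `g` with respect to `f`. -/
def RSSum (g f : ℝ → ℝ → ℝ) (x y : ℕ → ℝ) (ξ η : ℕ → ℕ → ℝ) (n m : ℕ) : ℝ :=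
  ∑ i ∈ Finset.range n, ∑ j ∈ Finset.range m,
    g (ξ i j) (η i j) *
      (f (x (i+1)) (y (j+1)) - f (x i) (y (j+1)) - f (x (i+1)) (y j) + f (x i) (y j))

/-- `g` is Riemann–Stieltjes integrable with respect to `f` over `[a,b] × [c,d]`,
with integral `A` (mesh measured by the diagonals of the subrectangles). -/
def RSIntegralOn (g f : ℝ → ℝ → ℝ) (a b c d A : ℝ) : Prop :=
  ∀ ε > 0, ∃ δ > 0, ∀ (n m : ℕ) (x y : ℕ → ℝ) (ξ η : ℕ → ℕ → ℝ),
    IsPartition x y n m a b c d → Tags x y ξ η n m →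
    (∀ i < n, ∀ j < m, Real.sqrt ((x (i+1) - x i)^2 + (y (j+1) - y j)^2) < δ) →
    |RSSum g f x y ξ η n m - A| < ε

/-- Improper Riemann–Stieltjes integral of `g` with respect to `f` over `ℝ²`,
as a Pringsheim limit over expanding compact rectangles. -/
def ImproperRS (g f : ℝ → ℝ → ℝ) (A : ℝ) : Prop :=
  ∀ ε > 0, ∃ M : ℝ, ∀ a b c d : ℝ, a ≤ -M → M ≤ b → c ≤ -M → M ≤ d →
    ∃ B : ℝ, RSIntegralOn g f a b c d B ∧ |B - A| < ε

/-- Improper Riemann–Stieltjes integral of a complex-valued `G` with respect to `f`,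
defined via real and imaginary parts. -/
def ImproperRSC (G : ℝ → ℝ → ℂ) (f : ℝ → ℝ → ℝ) (A : ℂ) : Prop :=
  ImproperRS (fun s t => (G s t).re) f A.re ∧ ImproperRS (fun s t => (G s t).im) f A.im

/-- Riemann sum of `f` over a tagged partition. -/
def KHSum (f : ℝ → ℝ → ℝ) (x y : ℕ → ℝ) (ξ η : ℕ → ℕ → ℝ) (n m : ℕ) : ℝ :=
  ∑ i ∈ Finset.range n, ∑ j ∈ Finset.range m,
    f (ξ i j) (η i j) * (x (i+1) - x i) * (y (j+1) - y j)

/-- The tagged partition is `δ`-fine for the gauge `δ`. -/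
def KHFine (δ : ℝ × ℝ → ℝ) (x y : ℕ → ℝ) (ξ η : ℕ → ℕ → ℝ) (n m : ℕ) : Prop :=
  ∀ i < n, ∀ j < m,
    Set.Icc (x i) (x (i+1)) ⊆
      Set.Ioo (ξ i j - δ (ξ i j, η i j)) (ξ i j + δ (ξ i j, η i j)) ∧
    Set.Icc (y j) (y (j+1)) ⊆
      Set.Ioo (η i j - δ (ξ i j, η i j)) (η i j + δ (ξ i j, η i j))

/-- `f` is Kurzweil–Henstock integrable over `[a,b] × [c,d]` with integral `A`. -/
def KHIntegralOn (f : ℝ → ℝ → ℝ) (a b c d A : ℝ) : Prop :=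
  ∀ ε > 0, ∃ δ : ℝ × ℝ → ℝ, (∀ p, 0 < δ p) ∧
    ∀ (n m : ℕ) (x y : ℕ → ℝ) (ξ η : ℕ → ℕ → ℝ),
      IsPartition x y n m a b c d → Tags x y ξ η n m → KHFine δ x y ξ η n m →
      |KHSum f x y ξ η n m - A| < ε

/-- Kurzweil–Henstock integrability of a complex-valued function, via components. -/
def KHIntegralOnC (f : ℝ → ℝ → ℂ) (a b c d : ℝ) (A : ℂ) : Prop :=
  KHIntegralOn (fun s t => (f s t).re) a b c d A.re ∧
  KHIntegralOn (fun s t => (f s t).im) a b c d A.im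

/-- Pringsheim limit, over expanding compact rectangles, of Kurzweil–Henstock integrals. -/
def HasKHPringsheim (f : ℝ → ℝ → ℝ) (A : ℝ) : Prop :=
  ∀ ε > 0, ∃ M : ℝ, ∀ a b c d : ℝ, a ≤ -M → M ≤ b → c ≤ -M → M ≤ d →
    ∃ B : ℝ, KHIntegralOn f a b c d B ∧ |B - A| < ε

/-- Complex-valued Pringsheim limit of Kurzweil–Henstock integrals. -/
def HasKHPringsheimC (f : ℝ → ℝ → ℂ) (A : ℂ) : Prop :=
  ∀ ε > 0, ∃ M : ℝ, ∀ a b c d : ℝ, a ≤ -M → M ≤ b → c ≤ -M → M ≤ d →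
    ∃ B : ℂ, KHIntegralOnC f a b c d B ∧ ‖B - A‖ < ε

/-- The kernel `e^{-i(ξ t₁ + η t₂)}`. -/
def fourierKernel (ξ η t₁ t₂ : ℝ) : ℂ :=
  Complex.exp (-Complex.I * ((ξ * t₁ + η * t₂ : ℝ) : ℂ))

/-- `A` is the KP-Fourier transform of `f` at `(ξ, η)`. -/
def HasKPFourier (f : ℝ → ℝ → ℝ) (ξ η : ℝ) (A : ℂ) : Prop :=
  HasKHPringsheimC (fun t₁ t₂ => (f t₁ t₂ : ℂ) * fourierKernel ξ η t₁ t₂) A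

/-- The region `{(ξ,η) : α₁ ≤ |ξ| ≤ β₁, α₂ ≤ |η| ≤ β₂}`. -/
def annulusRect (α₁ β₁ α₂ β₂ : ℝ) : Set (ℝ × ℝ) :=
  {p | α₁ ≤ |p.1| ∧ |p.1| ≤ β₁ ∧ α₂ ≤ |p.2| ∧ |p.2| ≤ β₂}

/-- The kernel `(sin(βt) - sin(αt))/t`, extended by continuity at `t = 0`. -/
def sinKernel (α β t : ℝ) : ℝ :=
  if t = 0 then β - α else (Real.sin (β * t) - Real.sin (α * t)) / t

/-- The kernel `h_{α,β}(t) = (sin(βt) - sin(αt))/(πt)`, extended by continuity at `t = 0`. -/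
def sinKernelPi (α β t : ℝ) : ℝ :=
  if t = 0 then (β - α) / π else (Real.sin (β * t) - Real.sin (α * t)) / (π * t)

/-- `g_{(x,y)}(t₁,t₂) = f(x−t₁,y−t₂) + f(x−t₁,y+t₂) + f(x+t₁,y−t₂) + f(x+t₁,y+t₂)`. -/
def quadSum (f : ℝ → ℝ → ℝ) (x y t₁ t₂ : ℝ) : ℝ :=
  f (x - t₁) (y - t₂) + f (x - t₁) (y + t₂) + f (x + t₁) (y - t₂) + f (x + t₁) (y + t₂)


lemma lemA (ξ : ℝ) (hξ : ξ ≠ 0) : ∃ I : ℂ, Tendsto (fun b : ℝ =>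
    ∫ s in (1:ℝ)..b, Complex.exp (-Complex.I * ((ξ * s : ℝ) : ℂ)) / (s : ℂ))
    atTop (𝓝 I) := by
  set c : ℂ := -Complex.I * (ξ : ℂ) with hc
  have hc0 : c ≠ 0 := by
    simp [hc, Complex.ext_iff, hξ]
  set u : ℝ → ℂ := fun x => (x : ℂ)⁻¹ with hu
  set v : ℝ → ℂ := fun x => Complex.exp (c * x) * c⁻¹ with hv
  set u' : ℝ → ℂ := fun x => -((x : ℂ) ^ 2)⁻¹ with hu'
  set v' : ℝ → ℂ := fun x => Complex.exp (c * x) with hv'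
  have hexpnorm : ∀ x : ℝ, ‖Complex.exp (c * x)‖ = 1 := by
    intro x
    rw [Complex.norm_exp]
    simp [hc]
  have hud : ∀ x : ℝ, x ≠ 0 → HasDerivAt u (u' x) x := by
    intro x hx
    exact (hasDerivAt_inv (by exact_mod_cast hx)).comp_ofReal
  have hvd : ∀ x : ℝ, HasDerivAt v (v' x) x := by
    intro x
    have h1 : HasDerivAt (fun y : ℝ => c * (y:ℂ)) c x := by
      simpa using (Complex.ofRealCLM.hasDerivAt (x := x)).const_mul c
    have h3 := (h1.cexp).mul_const c⁻¹
    simpa [hv, hv', mul_assoc, mul_inv_cancel₀ hc0] using h3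
  have hwmeas : AEStronglyMeasurable (fun x : ℝ => u' x * v x) (volume.restrict (Ioi 1)) := by
    apply ContinuousOn.aestronglyMeasurable _ measurableSet_Ioi
    apply ContinuousOn.mul
    · apply ContinuousOn.neg
      apply ContinuousOn.inv₀
      · fun_prop
      · intro x hx
        have h1 : (1:ℝ) < x := hx
        exact pow_ne_zero 2 (by exact_mod_cast ne_of_gt (by linarith : (0:ℝ) < x))
    · fun_prop
  have hwint : IntegrableOn (fun x : ℝ => u' x * v x) (Ioi 1) volume := by
    apply Integrable.mono' ((integrableOn_Ioi_rpow_of_lt (show (-2:ℝ) < -1 by norm_num)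
      one_pos).mul_const ‖c⁻¹‖) hwmeas
    filter_upwards [ae_restrict_mem measurableSet_Ioi] with x hx
    have hx1 : (1:ℝ) < x := hx
    have hx0 : (0:ℝ) < x := by linarith
    have hxr : x ^ (-2:ℝ) = (x^2)⁻¹ := by
      rw [Real.rpow_neg hx0.le]
      congr 1
      rw [show (2:ℝ) = ((2:ℕ):ℝ) by norm_num, Real.rpow_natCast]
    rw [norm_mul, hu', hv]
    simp only [norm_neg, norm_inv, norm_pow, Complex.norm_real, norm_mul, hexpnorm, one_mul,
      Real.norm_eq_abs, abs_of_pos hx0, hxr]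
    exact le_refl _
  -- the integration by parts identity for b ≥ 1
  have hparts : ∀ b : ℝ, 1 ≤ b →
      (∫ s in (1:ℝ)..b, Complex.exp (-Complex.I * ((ξ * s : ℝ) : ℂ)) / (s : ℂ))
      = u b * v b - u 1 * v 1 - ∫ x in (1:ℝ)..b, u' x * v x := by
    intro b hb
    have hsub : ∀ x ∈ uIcc (1:ℝ) b, x ≠ 0 := by
      intro x hx
      rw [uIcc_of_le hb] at hx
      exact ne_of_gt (by linarith [hx.1])
    have h1 : ∀ x ∈ uIcc (1:ℝ) b, HasDerivAt u (u' x) x := fun x hx => hud x (hsub x hx)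
    have h2 : ∀ x ∈ uIcc (1:ℝ) b, HasDerivAt v (v' x) x := fun x _ => hvd x
    have h3 : IntervalIntegrable u' volume 1 b := by
      apply ContinuousOn.intervalIntegrable
      apply ContinuousOn.neg
      apply ContinuousOn.inv₀
      · fun_prop
      · intro x hx
        exact pow_ne_zero 2 (by exact_mod_cast hsub x hx)
    have h4 : IntervalIntegrable v' volume 1 b := by
      apply ContinuousOn.intervalIntegrable; fun_prop
    have h5 := intervalIntegral.integral_mul_deriv_eq_deriv_mul h1 h2 h3 h4
    rw [← h5]
    apply intervalIntegral.integral_congr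
    intro x hx
    simp only [hu, hv', hc]
    rw [div_eq_mul_inv, mul_comm]
    push_cast
    ring_nf
  -- limits
  have hT1 : Tendsto (fun b : ℝ => u b * v b) atTop (𝓝 0) := by
    rw [tendsto_zero_iff_norm_tendsto_zero]
    apply squeeze_zero' (g := fun b : ℝ => b⁻¹ * ‖c⁻¹‖)
    · filter_upwards with b; positivity
    · filter_upwards [eventually_ge_atTop (1:ℝ)] with b hb
      rw [norm_mul, hu, hv, norm_mul, hexpnorm, one_mul]
      simp only [norm_inv, Complex.norm_real, Real.norm_eq_abs, abs_of_pos (by linarith : (0:ℝ) < b)]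
      exact le_rfl
    · simpa using (tendsto_inv_atTop_zero.mul_const ‖c⁻¹‖)
  have hT3 : Tendsto (fun b : ℝ => ∫ x in (1:ℝ)..b, u' x * v x) atTop
      (𝓝 (∫ x in Ioi (1:ℝ), u' x * v x)) :=
    intervalIntegral_tendsto_integral_Ioi 1 hwint tendsto_id
  refine ⟨0 - u 1 * v 1 - ∫ x in Ioi (1:ℝ), u' x * v x, ?_⟩
  apply Tendsto.congr' _ (((hT1.sub tendsto_const_nhds).sub hT3))
  filter_upwards [eventually_ge_atTop (1:ℝ)] with b hb
  rw [hparts b hb]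

lemma partMono (x : ℕ → ℝ) (n : ℕ) (hx : ∀ i < n, x i < x (i+1)) :
    ∀ i j, i ≤ j → j ≤ n → x i ≤ x j := by
  intro i j hij hjn
  induction j with
  | zero => simp [Nat.le_zero.mp hij]
  | succ k ih =>
    rcases Nat.lt_or_ge i (k+1) with h | h
    · exact le_trans (ih (Nat.lt_succ_iff.mp h) (by omega)) (le_of_lt (hx k (by omega)))
    · have : i = k+1 := le_antisymm hij h
      simp [this]

lemma iUnion_Ioc_part (x : ℕ → ℝ) (n : ℕ) (hx : ∀ i < n, x i < x (i+1)) :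
    (⋃ i ∈ Finset.range n, Ioc (x i) (x (i+1))) = Ioc (x 0) (x n) := by
  induction n with
  | zero => simp
  | succ k ih =>
    have hx' : ∀ i < k, x i < x (i+1) := fun i hi => hx i (by omega)
    rw [Finset.range_add_one]
    simp only [Finset.mem_insert, Set.iUnion_iUnion_eq_or_left]
    rw [ih hx', Set.union_comm, Set.Ioc_union_Ioc_eq_Ioc]
    · exact partMono x (k+1) hx 0 k (by omega) (by omega)
    · exact le_of_lt (hx k (by omega))

lemma badSum (x : ℕ → ℝ) (n : ℕ) (hx : ∀ i < n, x i < x (i+1)) (δ : ℝ) (hδ : 0 ≤ δ)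
    (hw : ∀ i < n, x (i+1) - x i ≤ 2*δ) :
    ∑ i ∈ (Finset.range n).filter (fun i => x i ≤ 1 ∧ 1 ≤ x (i+1)), (x (i+1) - x i)
      ≤ 4*δ := by
  set S := (Finset.range n).filter (fun i => x i ≤ 1 ∧ 1 ≤ x (i+1)) with hS
  rcases S.eq_empty_or_nonempty with h | h
  · rw [h, Finset.sum_empty]; linarith
  · have hmin : ∀ i ∈ S, S.min' h ≤ i := fun i hi => S.min'_le i hi
    set i0 := S.min' h with hi0def
    have hi0 : i0 ∈ S := S.min'_mem h
    have hsub : S ⊆ {i0, i0+1} := by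
      intro i hi
      simp only [Finset.mem_insert, Finset.mem_singleton]
      by_contra hcon
      push_neg at hcon
      have h1 : i0 < i := lt_of_le_of_ne (hmin i hi) (Ne.symm hcon.1)
      have h2 : i0 + 1 < i := lt_of_le_of_ne h1 (Ne.symm hcon.2)
      simp only [hS, Finset.mem_filter, Finset.mem_range] at hi hi0
      have hlt : x (i0+1) < x i := by
        calc x (i0+1) ≤ x (i-1) := partMono x n hx (i0+1) (i-1) (by omega) (by omega)
        _ < x i := by
            have := hx (i-1) (by omega)
            simpa [Nat.sub_add_cancel (by omega : 1 ≤ i)] using this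
      linarith [hi.2.2, hi0.2.2]
    have hδ0 : 0 ≤ 2*δ := by linarith
    calc ∑ i ∈ S, (x (i+1) - x i) ≤ ∑ i ∈ S, 2*δ := by
          apply Finset.sum_le_sum
          intro i hi
          simp only [hS, Finset.mem_filter, Finset.mem_range] at hi
          exact hw i hi.1
      _ = S.card * (2*δ) := by rw [Finset.sum_const, nsmul_eq_mul]
      _ ≤ 2 * (2*δ) := by
          have hcard : S.card ≤ 2 := le_trans (Finset.card_le_card hsub)
            (le_trans (Finset.card_insert_le _ _) (by simp))
          have := mul_le_mul_of_nonneg_right (show (S.card : ℝ) ≤ 2 by exact_mod_cast hcard) hδ0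
          linarith
      _ = 4*δ := by ring

set_option maxHeartbeats 1000000 in
lemma lemB (φ : ℝ → ℝ → ℝ) (hφ : Continuous fun p : ℝ × ℝ => φ p.1 p.2)
    (a b c d : ℝ) (ha : a < 1) (hb : 1 ≤ b) (hc : c < 1) (hd : 1 ≤ d) :
    KHIntegralOn (fun s t => if 1 ≤ s ∧ 1 ≤ t then φ s t else 0) a b c d
      (∫ p in Icc (1:ℝ) b ×ˢ Icc (1:ℝ) d, φ p.1 p.2) := by
  have hab : a < b := lt_of_lt_of_le ha hb
  have hcd : c < d := lt_of_lt_of_le hc hd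
  set Φ : ℝ × ℝ → ℝ := fun p => φ p.1 p.2 with hΦdef
  set F : ℝ × ℝ → ℝ := fun p => if 1 ≤ p.1 ∧ 1 ≤ p.2 then Φ p else 0 with hFdef
  have hFind : F = (Ici (1:ℝ) ×ˢ Ici (1:ℝ)).indicator Φ := by
    funext p
    simp [hFdef, Set.indicator_apply, Set.mem_prod, Prod.le_def]
  have hFmeas : Measurable F := by
    rw [hFind]
    exact hφ.measurable.indicator (measurableSet_Ici.prod measurableSet_Ici)
  set K : Set (ℝ × ℝ) := Icc a b ×ˢ Icc c d with hKdef
  have hKcomp : IsCompact K := isCompact_Icc.prod isCompact_Icc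
  have hKmeas : MeasurableSet K := measurableSet_Icc.prod measurableSet_Icc
  obtain ⟨C, hC⟩ := hKcomp.exists_bound_of_continuousOn hφ.continuousOn
  have h11K : ((1:ℝ), (1:ℝ)) ∈ K := ⟨⟨ha.le, hb⟩, ⟨hc.le, hd⟩⟩
  have hC0 : 0 ≤ C := le_trans (norm_nonneg _) (hC _ h11K)
  have hFbound : ∀ p ∈ K, |F p| ≤ C := by
    intro p hp
    by_cases h : 1 ≤ p.1 ∧ 1 ≤ p.2
    · simp only [hFdef, if_pos h]
      exact (Real.norm_eq_abs _) ▸ hC p hp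
    · simp [hFdef, if_neg h, hC0]
  have hFint : ∀ s ⊆ K, MeasurableSet s → IntegrableOn F s volume := by
    intro s hs hms
    have hfin : volume s < ⊤ := lt_of_le_of_lt (measure_mono hs) hKcomp.measure_lt_top
    apply Integrable.mono' (g := fun _ => C) (integrableOn_const (C := C) hfin.ne)
      hFmeas.aestronglyMeasurable
    filter_upwards [ae_restrict_mem hms] with p hp
    rw [Real.norm_eq_abs]
    exact hFbound p (hs hp)
  -- value identification
  have hB : (∫ p in Icc (1:ℝ) b ×ˢ Icc (1:ℝ) d, Φ p) = ∫ p in Ioc a b ×ˢ Ioc c d, F p := by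
    rw [hFind, setIntegral_indicator (measurableSet_Ici.prod measurableSet_Ici),
      Set.prod_inter_prod]
    have h1 : Ioc a b ∩ Ici 1 = Icc 1 b := by
      ext t
      simp only [mem_inter_iff, mem_Ioc, mem_Ici, mem_Icc]
      constructor
      · rintro ⟨⟨_, h2⟩, h3⟩; exact ⟨h3, h2⟩
      · rintro ⟨h1, h2⟩; exact ⟨⟨lt_of_lt_of_le ha h1, h2⟩, h1⟩
    have h2 : Ioc c d ∩ Ici 1 = Icc 1 d := by
      ext t
      simp only [mem_inter_iff, mem_Ioc, mem_Ici, mem_Icc]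
      constructor
      · rintro ⟨⟨_, h2⟩, h3⟩; exact ⟨h3, h2⟩
      · rintro ⟨h1, h2⟩; exact ⟨⟨lt_of_lt_of_le hc h1, h2⟩, h1⟩
    rw [h1, h2]
  intro ε hε
  -- uniform continuity
  have hUC := hKcomp.uniformContinuousOn_of_continuous hφ.continuousOn
  rw [Metric.uniformContinuousOn_iff] at hUC
  set P : ℝ := (b-a)*(d-c) with hPdef
  set Q : ℝ := (b-a)+(d-c) with hQdef
  have hP0 : 0 < P := by apply mul_pos <;> linarith
  have hQ0 : 0 < Q := by simp only [hQdef]; linarith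
  set ε₁ : ℝ := ε/(2*(P+1)) with hε₁def
  have hε₁ : 0 < ε₁ := by apply div_pos hε; linarith
  obtain ⟨δ₀, hδ₀, hUC⟩ := hUC ε₁ hε₁
  set δ₁ : ℝ := ε/(2*(8*C*Q+1)) with hδ₁def
  have hδ₁ : 0 < δ₁ := by
    apply div_pos hε
    have : 0 ≤ 8*C*Q := by positivity
    linarith
  set δ : ℝ := min δ₀ δ₁ with hδdef
  have hδpos : 0 < δ := lt_min hδ₀ hδ₁
  have h1 : ε₁ * P < ε/2 := by
    rw [hε₁def, div_mul_eq_mul_div, div_lt_div_iff₀ (by linarith : (0:ℝ) < 2*(P+1)) two_pos]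
    nlinarith
  have h2 : 8*C*δ*Q ≤ ε/2 := by
    have hδle : δ ≤ δ₁ := min_le_right _ _
    have h8 : (0:ℝ) ≤ 8*C*Q := by positivity
    calc 8*C*δ*Q ≤ 8*C*δ₁*Q := by nlinarith
      _ = ε * (8*C*Q) / (2*(8*C*Q+1)) := by rw [hδ₁def]; ring
      _ ≤ ε/2 := by
          rw [div_le_div_iff₀ (by linarith) two_pos]
          nlinarith
  refine ⟨fun _ => δ, fun _ => hδpos, ?_⟩
  intro n m x y tx ty hpart htags hfine
  obtain ⟨hx0, hxn, hy0, hym, hxm, hymm⟩ := hpart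
  have hxmono := partMono x n hxm
  have hymono := partMono y m hymm
  have hxab : ∀ i ≤ n, a ≤ x i ∧ x i ≤ b := fun i hi =>
    ⟨hx0 ▸ hxmono 0 i (Nat.zero_le _) hi, hxn ▸ hxmono i n hi le_rfl⟩
  have hycd : ∀ j ≤ m, c ≤ y j ∧ y j ≤ d := fun j hj =>
    ⟨hy0 ▸ hymono 0 j (Nat.zero_le _) hj, hym ▸ hymono j m hj le_rfl⟩
  have hn : 0 < n := by
    rcases Nat.eq_zero_or_pos n with h | h
    · exfalso; rw [h] at hxn; rw [hx0] at hxn; linarith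
    · exact h
  have hm : 0 < m := by
    rcases Nat.eq_zero_or_pos m with h | h
    · exfalso; rw [h] at hym; rw [hy0] at hym; linarith
    · exact h
  -- widths
  have hwx : ∀ i < n, x (i+1) - x i ≤ 2*δ := by
    intro i hi
    have hf := (hfine i hi 0 hm).1
    have h1 := hf ⟨le_rfl, (hxm i hi).le⟩
    have h2 := hf ⟨(hxm i hi).le, le_rfl⟩
    simp only [mem_Ioo] at h1 h2
    linarith
  have hwy : ∀ j < m, y (j+1) - y j ≤ 2*δ := by
    intro j hj
    have hf := (hfine 0 hn j hj).2
    have h1 := hf ⟨le_rfl, (hymm j hj).le⟩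
    have h2 := hf ⟨(hymm j hj).le, le_rfl⟩
    simp only [mem_Ioo] at h1 h2
    linarith
  -- bad-column indicator bounds
  set bx : ℕ → ℝ := fun i => if x i ≤ 1 ∧ 1 ≤ x (i+1) then 2*C else 0 with hbxdef
  set by' : ℕ → ℝ := fun j => if y j ≤ 1 ∧ 1 ≤ y (j+1) then 2*C else 0 with hbydef
  have hbx0 : ∀ i, 0 ≤ bx i := by
    intro i; simp only [hbxdef]; split
    · linarith
    · exact le_rfl
  have hby0 : ∀ j, 0 ≤ by' j := by
    intro j; simp only [hbydef]; split
    · linarith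
    · exact le_rfl
  -- pointwise difference bound on closed subrectangles
  have hptw : ∀ i < n, ∀ j < m, ∀ p ∈ Icc (x i) (x (i+1)) ×ˢ Icc (y j) (y (j+1)),
      |(if 1 ≤ tx i j ∧ 1 ≤ ty i j then φ (tx i j) (ty i j) else 0) - F p|
        ≤ ε₁ + bx i + by' j := by
    intro i hi j hj p hp
    have htag := htags i hi j hj
    have hpK : p ∈ K := by
      constructor
      · exact ⟨le_trans (hxab i (le_of_lt hi)).1 hp.1.1,
          le_trans hp.1.2 (hxab (i+1) hi).2⟩
      · exact ⟨le_trans (hycd j (le_of_lt hj)).1 hp.2.1,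
          le_trans hp.2.2 (hycd (j+1) hj).2⟩
    have htK : ((tx i j, ty i j) : ℝ × ℝ) ∈ K := by
      constructor
      · exact ⟨le_trans (hxab i (le_of_lt hi)).1 htag.1.1,
          le_trans htag.1.2 (hxab (i+1) hi).2⟩
      · exact ⟨le_trans (hycd j (le_of_lt hj)).1 htag.2.1,
          le_trans htag.2.2 (hycd (j+1) hj).2⟩
    have hftag : |(if 1 ≤ tx i j ∧ 1 ≤ ty i j then φ (tx i j) (ty i j) else 0)| ≤ C := by
      split
      · exact (Real.norm_eq_abs _) ▸ hC _ htK
      · simpa using hC0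
    by_cases hbadx : x i ≤ 1 ∧ 1 ≤ x (i+1)
    · have hbxval : bx i = 2*C := by simp only [hbxdef]; rw [if_pos hbadx]
      calc |(if 1 ≤ tx i j ∧ 1 ≤ ty i j then φ (tx i j) (ty i j) else 0) - F p|
          ≤ |(if 1 ≤ tx i j ∧ 1 ≤ ty i j then φ (tx i j) (ty i j) else 0)| + |F p| :=
            abs_sub _ _
        _ ≤ C + C := add_le_add hftag (hFbound p hpK)
        _ ≤ ε₁ + bx i + by' j := by rw [hbxval]; have := hby0 j; linarith
    · by_cases hbady : y j ≤ 1 ∧ 1 ≤ y (j+1)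
      · have hbyval : by' j = 2*C := by simp only [hbydef]; rw [if_pos hbady]
        calc |(if 1 ≤ tx i j ∧ 1 ≤ ty i j then φ (tx i j) (ty i j) else 0) - F p|
            ≤ |(if 1 ≤ tx i j ∧ 1 ≤ ty i j then φ (tx i j) (ty i j) else 0)| + |F p| :=
              abs_sub _ _
          _ ≤ C + C := add_le_add hftag (hFbound p hpK)
          _ ≤ ε₁ + bx i + by' j := by rw [hbyval]; have := hbx0 i; linarith
      · -- good rectangle
        have hgoal : |(if 1 ≤ tx i j ∧ 1 ≤ ty i j then φ (tx i j) (ty i j) else 0) - F p|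
            ≤ ε₁ := by
          push_neg at hbadx hbady
          rcases le_or_gt (x i) 1 with h1 | h1
          · have hxi1 : x (i+1) < 1 := hbadx h1
            have hFp : F p = 0 := by
              simp only [hFdef]
              rw [if_neg]
              rintro ⟨hcon, -⟩
              linarith [hp.1.2]
            have hft : (if 1 ≤ tx i j ∧ 1 ≤ ty i j then φ (tx i j) (ty i j) else 0) = 0 := by
              rw [if_neg]
              rintro ⟨hcon, -⟩
              linarith [htag.1.2]
            rw [hFp, hft]
            simp [le_of_lt hε₁]
          · rcases le_or_gt (y j) 1 with h2 | h2
            · have hyj1 : y (j+1) < 1 := hbady h2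
              have hFp : F p = 0 := by
                simp only [hFdef]
                rw [if_neg]
                rintro ⟨-, hcon⟩
                linarith [hp.2.2]
              have hft : (if 1 ≤ tx i j ∧ 1 ≤ ty i j then φ (tx i j) (ty i j) else 0) = 0 := by
                rw [if_neg]
                rintro ⟨-, hcon⟩
                linarith [htag.2.2]
              rw [hFp, hft]
              simp [le_of_lt hε₁]
            · -- all coordinates > 1
              have h1p : 1 ≤ p.1 := le_trans h1.le hp.1.1
              have h2p : 1 ≤ p.2 := le_trans h2.le hp.2.1
              have h1t : 1 ≤ tx i j := le_trans h1.le htag.1.1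
              have h2t : 1 ≤ ty i j := le_trans h2.le htag.2.1
              have hFp : F p = Φ p := by simp only [hFdef]; rw [if_pos ⟨h1p, h2p⟩]
              have hft : (if 1 ≤ tx i j ∧ 1 ≤ ty i j then φ (tx i j) (ty i j) else 0)
                  = Φ (tx i j, ty i j) := by rw [if_pos ⟨h1t, h2t⟩]
              rw [hFp, hft]
              have hfinij := hfine i hi j hj
              have hd1 : dist (tx i j) p.1 < δ := by
                have hin := hfinij.1 hp.1
                have htin := htag.1
                simp only [mem_Ioo] at hin
                rw [Real.dist_eq, abs_sub_lt_iff]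
                constructor <;> linarith [hin.1, hin.2]
              have hd2 : dist (ty i j) p.2 < δ := by
                have hin := hfinij.2 hp.2
                simp only [mem_Ioo] at hin
                rw [Real.dist_eq, abs_sub_lt_iff]
                constructor <;> linarith [hin.1, hin.2]
              have hdist : dist ((tx i j, ty i j) : ℝ × ℝ) p < δ₀ := by
                rw [Prod.dist_eq]
                apply lt_of_lt_of_le (max_lt hd1 hd2) (min_le_left _ _)
              have := hUC _ htK p hpK hdist
              rw [Real.dist_eq] at this
              exact this.le
        exact le_trans hgoal (by have := hbx0 i; have := hby0 j; linarith)
  -- subrectangles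
  set R : ℕ → ℕ → Set (ℝ × ℝ) := fun i j => Ioc (x i) (x (i+1)) ×ˢ Ioc (y j) (y (j+1)) with hRdef
  have hRmeas : ∀ i j, MeasurableSet (R i j) := fun i j =>
    measurableSet_Ioc.prod measurableSet_Ioc
  have hRsub : ∀ i < n, ∀ j < m, R i j ⊆ K := by
    intro i hi j hj
    apply Set.prod_mono
    · exact subset_trans Ioc_subset_Icc_self
        (Icc_subset_Icc (hxab i hi.le).1 (hxab (i+1) hi).2)
    · exact subset_trans Ioc_subset_Icc_self
        (Icc_subset_Icc (hycd j hj.le).1 (hycd (j+1) hj).2)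
  have hRvol : ∀ i < n, ∀ j < m,
      (volume (R i j)).toReal = (x (i+1) - x i) * (y (j+1) - y j) := by
    intro i hi j hj
    show (volume (Ioc (x i) (x (i+1)) ×ˢ Ioc (y j) (y (j+1)))).toReal = _
    rw [MeasureTheory.Measure.volume_eq_prod, Measure.prod_prod, Real.volume_Ioc,
      Real.volume_Ioc, ← ENNReal.ofReal_mul (by linarith [hxm i hi])]
    exact ENNReal.toReal_ofReal (by nlinarith [hxm i hi, hymm j hj])
  have hRfin : ∀ i < n, ∀ j < m, volume (R i j) < ⊤ := fun i hi j hj =>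
    lt_of_le_of_lt (measure_mono (hRsub i hi j hj)) hKcomp.measure_lt_top
  -- key per-rectangle estimate
  have hkey : ∀ i < n, ∀ j < m,
      |(if 1 ≤ tx i j ∧ 1 ≤ ty i j then φ (tx i j) (ty i j) else 0)
          * (x (i+1) - x i) * (y (j+1) - y j) - ∫ p in R i j, F p|
        ≤ (ε₁ + bx i + by' j) * ((x (i+1) - x i) * (y (j+1) - y j)) := by
    intro i hi j hj
    set cst : ℝ := (if 1 ≤ tx i j ∧ 1 ≤ ty i j then φ (tx i j) (ty i j) else 0) with hcst
    have hint := hFint _ (hRsub i hi j hj) (hRmeas i j)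
    have h1 : cst * (x (i+1) - x i) * (y (j+1) - y j) = ∫ _ in R i j, cst := by
      rw [setIntegral_const, measureReal_def, hRvol i hi j hj, smul_eq_mul]; ring
    rw [h1, ← integral_sub (integrableOn_const (C := cst) (hRfin i hi j hj).ne) hint]
    have hbnd : ‖∫ p in R i j, (cst - F p)‖
        ≤ (ε₁ + bx i + by' j) * (volume (R i j)).toReal := by
      apply norm_setIntegral_le_of_norm_le_const (hRfin i hi j hj)
      · intro p hp
        rw [Real.norm_eq_abs]
        exact hptw i hi j hj p ⟨Ioc_subset_Icc_self hp.1, Ioc_subset_Icc_self hp.2⟩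
    rw [Real.norm_eq_abs, hRvol i hi j hj] at hbnd
    exact hbnd
  -- disjointness
  have hdisjx : ∀ i₁ ∈ Finset.range n, ∀ i₂ ∈ Finset.range n, i₁ ≠ i₂ →
      Disjoint (Ioc (x i₁) (x (i₁+1))) (Ioc (x i₂) (x (i₂+1))) := by
    intro i₁ h1 i₂ h2 hne
    rw [Set.Ioc_disjoint_Ioc]
    simp only [Finset.mem_range] at h1 h2
    rcases lt_or_gt_of_ne hne with h | h
    · calc min (x (i₁+1)) (x (i₂+1)) ≤ x (i₁+1) := min_le_left _ _
        _ ≤ x i₂ := hxmono (i₁+1) i₂ h h2.le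
        _ ≤ max (x i₁) (x i₂) := le_max_right _ _
    · calc min (x (i₁+1)) (x (i₂+1)) ≤ x (i₂+1) := min_le_right _ _
        _ ≤ x i₁ := hxmono (i₂+1) i₁ h h1.le
        _ ≤ max (x i₁) (x i₂) := le_max_left _ _
  have hdisjy : ∀ j₁ ∈ Finset.range m, ∀ j₂ ∈ Finset.range m, j₁ ≠ j₂ →
      Disjoint (Ioc (y j₁) (y (j₁+1))) (Ioc (y j₂) (y (j₂+1))) := by
    intro j₁ h1 j₂ h2 hne
    rw [Set.Ioc_disjoint_Ioc]
    simp only [Finset.mem_range] at h1 h2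
    rcases lt_or_gt_of_ne hne with h | h
    · calc min (y (j₁+1)) (y (j₂+1)) ≤ y (j₁+1) := min_le_left _ _
        _ ≤ y j₂ := hymono (j₁+1) j₂ h h2.le
        _ ≤ max (y j₁) (y j₂) := le_max_right _ _
    · calc min (y (j₁+1)) (y (j₂+1)) ≤ y (j₂+1) := min_le_right _ _
        _ ≤ y j₁ := hymono (j₂+1) j₁ h h1.le
        _ ≤ max (y j₁) (y j₂) := le_max_left _ _
  -- grid decomposition of the integral
  have hBsum : (∫ p in Ioc a b ×ˢ Ioc c d, F p)
      = ∑ i ∈ Finset.range n, ∑ j ∈ Finset.range m, ∫ p in R i j, F p := by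
    have hxU : Ioc a b = ⋃ i ∈ Finset.range n, Ioc (x i) (x (i+1)) := by
      rw [iUnion_Ioc_part x n hxm, hx0, hxn]
    have hyU : Ioc c d = ⋃ j ∈ Finset.range m, Ioc (y j) (y (j+1)) := by
      rw [iUnion_Ioc_part y m hymm, hy0, hym]
    have hsplit1 : (Ioc a b ×ˢ Ioc c d : Set (ℝ×ℝ))
        = ⋃ i ∈ Finset.range n, (Ioc (x i) (x (i+1)) ×ˢ Ioc c d) := by
      rw [hxU]; ext p; simp only [Set.mem_prod, Set.mem_iUnion]; tauto
    have hcolsub : ∀ i < n, (Ioc (x i) (x (i+1)) ×ˢ Ioc c d : Set (ℝ×ℝ)) ⊆ K := by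
      intro i hi
      apply Set.prod_mono
      · exact subset_trans Ioc_subset_Icc_self
          (Icc_subset_Icc (hxab i hi.le).1 (hxab (i+1) hi).2)
      · exact Ioc_subset_Icc_self
    rw [hsplit1, integral_biUnion_finset (Finset.range n)
      (fun i _ => measurableSet_Ioc.prod measurableSet_Ioc)
      (fun i₁ h1 i₂ h2 hne => by
        simp only [Function.onFun]
        rw [Set.disjoint_left]
        rintro p ⟨hp1, hp2⟩ ⟨hq1, hq2⟩
        exact Set.disjoint_left.mp
          (hdisjx i₁ (Finset.mem_coe.mp h1) i₂ (Finset.mem_coe.mp h2) hne) hp1 hq1)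
      (fun i hi => hFint _ (hcolsub i (Finset.mem_range.mp hi))
        (measurableSet_Ioc.prod measurableSet_Ioc))]
    apply Finset.sum_congr rfl
    intro i hi
    have hi' := Finset.mem_range.mp hi
    have hsplit2 : (Ioc (x i) (x (i+1)) ×ˢ Ioc c d : Set (ℝ×ℝ))
        = ⋃ j ∈ Finset.range m, R i j := by
      rw [hyU]; ext p; simp only [hRdef, Set.mem_prod, Set.mem_iUnion]; tauto
    rw [hsplit2, integral_biUnion_finset (Finset.range m)
      (fun j _ => hRmeas i j)
      (fun j₁ h1 j₂ h2 hne => by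
        simp only [Function.onFun]
        rw [Set.disjoint_left]
        rintro p ⟨hp1, hp2⟩ ⟨hq1, hq2⟩
        exact Set.disjoint_left.mp
          (hdisjy j₁ (Finset.mem_coe.mp h1) j₂ (Finset.mem_coe.mp h2) hne) hp2 hq2)
      (fun j hj => hFint _ (hRsub i hi' j (Finset.mem_range.mp hj)) (hRmeas i j))]
  -- rewrite the difference as a double sum
  have hsum : KHSum (fun s t => if 1 ≤ s ∧ 1 ≤ t then φ s t else 0) x y tx ty n m
      - ∫ p in Icc (1:ℝ) b ×ˢ Icc (1:ℝ) d, Φ p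
      = ∑ i ∈ Finset.range n, ∑ j ∈ Finset.range m,
        ((if 1 ≤ tx i j ∧ 1 ≤ ty i j then φ (tx i j) (ty i j) else 0)
          * (x (i+1) - x i) * (y (j+1) - y j) - ∫ p in R i j, F p) := by
    rw [hB, hBsum, KHSum, ← Finset.sum_sub_distrib]
    apply Finset.sum_congr rfl
    intro i _
    rw [← Finset.sum_sub_distrib]
  -- telescoping sums
  have hSx : ∑ i ∈ Finset.range n, (x (i+1) - x i) = b - a := by
    rw [Finset.sum_range_sub, hxn, hx0]
  have hSy : ∑ j ∈ Finset.range m, (y (j+1) - y j) = d - c := by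
    rw [Finset.sum_range_sub, hym, hy0]
  -- bound
  have habs : |∑ i ∈ Finset.range n, ∑ j ∈ Finset.range m,
      ((if 1 ≤ tx i j ∧ 1 ≤ ty i j then φ (tx i j) (ty i j) else 0)
        * (x (i+1) - x i) * (y (j+1) - y j) - ∫ p in R i j, F p)|
      ≤ ∑ i ∈ Finset.range n, ∑ j ∈ Finset.range m,
        (ε₁ + bx i + by' j) * ((x (i+1) - x i) * (y (j+1) - y j)) := by
    apply le_trans (Finset.abs_sum_le_sum_abs _ _)
    apply Finset.sum_le_sum
    intro i hi
    apply le_trans (Finset.abs_sum_le_sum_abs _ _)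
    apply Finset.sum_le_sum
    intro j hj
    exact hkey i (Finset.mem_range.mp hi) j (Finset.mem_range.mp hj)
  have hsplit : ∑ i ∈ Finset.range n, ∑ j ∈ Finset.range m,
      (ε₁ + bx i + by' j) * ((x (i+1) - x i) * (y (j+1) - y j))
      = ε₁ * ((b-a)*(d-c))
        + (∑ i ∈ Finset.range n, bx i * (x (i+1) - x i)) * (d-c)
        + (b-a) * (∑ j ∈ Finset.range m, by' j * (y (j+1) - y j)) := by
    calc ∑ i ∈ Finset.range n, ∑ j ∈ Finset.range m,
        (ε₁ + bx i + by' j) * ((x (i+1) - x i) * (y (j+1) - y j))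
        = ∑ i ∈ Finset.range n, ∑ j ∈ Finset.range m,
          ((ε₁ * (x (i+1) - x i)) * (y (j+1) - y j)
            + (bx i * (x (i+1) - x i)) * (y (j+1) - y j)
            + (x (i+1) - x i) * (by' j * (y (j+1) - y j))) := by
          apply Finset.sum_congr rfl; intro i _
          apply Finset.sum_congr rfl; intro j _
          ring
      _ = ∑ i ∈ Finset.range n,
          ((ε₁ * (x (i+1) - x i)) * (d-c) + (bx i * (x (i+1) - x i)) * (d-c)
            + (x (i+1) - x i) * (∑ j ∈ Finset.range m, by' j * (y (j+1) - y j))) := by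
          apply Finset.sum_congr rfl; intro i _
          rw [Finset.sum_add_distrib, Finset.sum_add_distrib,
            ← Finset.mul_sum, ← Finset.mul_sum, ← Finset.mul_sum, hSy]
      _ = ε₁ * ((b-a)*(d-c))
          + (∑ i ∈ Finset.range n, bx i * (x (i+1) - x i)) * (d-c)
          + (b-a) * (∑ j ∈ Finset.range m, by' j * (y (j+1) - y j)) := by
          rw [Finset.sum_add_distrib, Finset.sum_add_distrib, ← Finset.sum_mul,
            ← Finset.sum_mul, ← Finset.mul_sum, ← Finset.sum_mul, hSx]
          ring
  have hbadx_sum : ∑ i ∈ Finset.range n, bx i * (x (i+1) - x i) ≤ 2*C*(4*δ) := by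
    have heq : ∑ i ∈ Finset.range n, bx i * (x (i+1) - x i)
        = 2*C * ∑ i ∈ (Finset.range n).filter (fun i => x i ≤ 1 ∧ 1 ≤ x (i+1)),
            (x (i+1) - x i) := by
      simp_rw [hbxdef, ite_mul, zero_mul]
      rw [← Finset.sum_filter, Finset.mul_sum]
    rw [heq]
    exact mul_le_mul_of_nonneg_left (badSum x n hxm δ hδpos.le hwx) (by linarith)
  have hbady_sum : ∑ j ∈ Finset.range m, by' j * (y (j+1) - y j) ≤ 2*C*(4*δ) := by
    have heq : ∑ j ∈ Finset.range m, by' j * (y (j+1) - y j)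
        = 2*C * ∑ j ∈ (Finset.range m).filter (fun j => y j ≤ 1 ∧ 1 ≤ y (j+1)),
            (y (j+1) - y j) := by
      simp_rw [hbydef, ite_mul, zero_mul]
      rw [← Finset.sum_filter, Finset.mul_sum]
    rw [heq]
    exact mul_le_mul_of_nonneg_left (badSum y m hymm δ hδpos.le hwy) (by linarith)
  rw [hsum]
  calc |∑ i ∈ Finset.range n, ∑ j ∈ Finset.range m,
      ((if 1 ≤ tx i j ∧ 1 ≤ ty i j then φ (tx i j) (ty i j) else 0)
        * (x (i+1) - x i) * (y (j+1) - y j) - ∫ p in R i j, F p)|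
      ≤ ε₁ * ((b-a)*(d-c))
        + (∑ i ∈ Finset.range n, bx i * (x (i+1) - x i)) * (d-c)
        + (b-a) * (∑ j ∈ Finset.range m, by' j * (y (j+1) - y j)) := by
        rw [← hsplit]; exact habs
    _ ≤ ε₁ * P + 2*C*(4*δ)*(d-c) + (b-a)*(2*C*(4*δ)) := by
        have hbx_nonneg : (0:ℝ) ≤ d - c := by linarith
        apply add_le_add (add_le_add (le_of_eq (by rw [hPdef]))
          (mul_le_mul_of_nonneg_right hbadx_sum hbx_nonneg))
        apply mul_le_mul_of_nonneg_left hbady_sum (by linarith)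
    _ = ε₁ * P + 8*C*δ*Q := by rw [hQdef]; ring
    _ < ε/2 + ε/2 := add_lt_add_of_lt_of_le h1 h2
    _ = ε := by ring

lemma prodIntegral (ξ η b d : ℝ) (hb : 1 ≤ b) (hd : 1 ≤ d) :
    (∫ s in (1:ℝ)..b, Complex.exp (-Complex.I * ((ξ * s : ℝ) : ℂ)) / (s : ℂ)) *
    (∫ s in (1:ℝ)..d, Complex.exp (-Complex.I * ((η * s : ℝ) : ℂ)) / (s : ℂ))
    = ∫ p in Ioc (1:ℝ) b ×ˢ Ioc (1:ℝ) d,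
        (Complex.exp (-Complex.I * ((ξ * p.1 : ℝ) : ℂ)) / (p.1 : ℂ)) *
        (Complex.exp (-Complex.I * ((η * p.2 : ℝ) : ℂ)) / (p.2 : ℂ)) := by
  rw [intervalIntegral.integral_of_le hb, intervalIntegral.integral_of_le hd,
    ← MeasureTheory.integral_prod_mul]
  rw [Measure.prod_restrict, ← MeasureTheory.Measure.volume_eq_prod]

lemma kernContOn (ξ η b d : ℝ) :
    ContinuousOn (fun p : ℝ × ℝ =>
      (Complex.exp (-Complex.I * ((ξ * p.1 : ℝ) : ℂ)) / (p.1 : ℂ)) *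
      (Complex.exp (-Complex.I * ((η * p.2 : ℝ) : ℂ)) / (p.2 : ℂ)))
      (Ioc (1:ℝ) b ×ˢ Ioc (1:ℝ) d) := by
  apply ContinuousOn.mul
  · apply ContinuousOn.div
    · fun_prop
    · fun_prop
    · rintro ⟨s, t⟩ hp
      have : (1:ℝ) < s := hp.1.1
      exact_mod_cast ne_of_gt (by linarith : (0:ℝ) < s)
  · apply ContinuousOn.div
    · fun_prop
    · fun_prop
    · rintro ⟨s, t⟩ hp
      have : (1:ℝ) < t := hp.2.1
      exact_mod_cast ne_of_gt (by linarith : (0:ℝ) < t)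

lemma kernIntOn (ξ η b d : ℝ) :
    IntegrableOn (fun p : ℝ × ℝ =>
      (Complex.exp (-Complex.I * ((ξ * p.1 : ℝ) : ℂ)) / (p.1 : ℂ)) *
      (Complex.exp (-Complex.I * ((η * p.2 : ℝ) : ℂ)) / (p.2 : ℂ)))
      (Ioc (1:ℝ) b ×ˢ Ioc (1:ℝ) d) volume := by
  have hmeas : MeasurableSet (Ioc (1:ℝ) b ×ˢ Ioc (1:ℝ) d) :=
    measurableSet_Ioc.prod measurableSet_Ioc
  have hfin : volume (Ioc (1:ℝ) b ×ˢ Ioc (1:ℝ) d) < ⊤ := by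
    rw [MeasureTheory.Measure.volume_eq_prod, Measure.prod_prod, Real.volume_Ioc,
      Real.volume_Ioc]
    exact ENNReal.mul_lt_top ENNReal.ofReal_lt_top ENNReal.ofReal_lt_top
  apply Integrable.mono' (integrableOn_const (C := (1:ℝ)) hfin.ne)
    ((kernContOn ξ η b d).aestronglyMeasurable hmeas)
  filter_upwards [ae_restrict_mem hmeas] with p hp
  have h1 : (1:ℝ) < p.1 := hp.1.1
  have h2 : (1:ℝ) < p.2 := hp.2.1
  rw [norm_mul, norm_div, norm_div]
  have e1 : ‖Complex.exp (-Complex.I * ((ξ * p.1 : ℝ) : ℂ))‖ = 1 := by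
    rw [Complex.norm_exp]; simp
  have e2 : ‖Complex.exp (-Complex.I * ((η * p.2 : ℝ) : ℂ))‖ = 1 := by
    rw [Complex.norm_exp]; simp
  rw [e1, e2]
  simp only [Complex.norm_real, Real.norm_eq_abs, abs_of_pos (by linarith : (0:ℝ) < p.1),
    abs_of_pos (by linarith : (0:ℝ) < p.2)]
  rw [div_mul_div_comm, one_mul]
  rw [div_le_one (by nlinarith)]
  nlinarith

lemma expRe (r : ℝ) : (Complex.exp (-Complex.I * (r:ℂ))).re = Real.cos r := by
  rw [Complex.exp_re]
  have h1 : (-Complex.I * (r:ℂ)).re = 0 := by simp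
  have h2 : (-Complex.I * (r:ℂ)).im = -r := by simp
  rw [h1, h2, Real.exp_zero, Real.cos_neg, one_mul]

lemma expIm (r : ℝ) : (Complex.exp (-Complex.I * (r:ℂ))).im = -Real.sin r := by
  rw [Complex.exp_im]
  have h1 : (-Complex.I * (r:ℂ)).re = 0 := by simp
  have h2 : (-Complex.I * (r:ℂ)).im = -r := by simp
  rw [h1, h2, Real.exp_zero, Real.sin_neg, one_mul]

lemma ptwRe (ξ η : ℝ) {s t : ℝ} (hs : 1 ≤ s) (ht : 1 ≤ t) :
    ((Complex.exp (-Complex.I * ((ξ * s : ℝ) : ℂ)) / (s : ℂ)) *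
     (Complex.exp (-Complex.I * ((η * t : ℝ) : ℂ)) / (t : ℂ))).re
    = Real.cos (ξ * s + η * t) / (max s 1 * max t 1) := by
  have hs0 : (0:ℝ) < s := by linarith
  have ht0 : (0:ℝ) < t := by linarith
  have hprod : (Complex.exp (-Complex.I * ((ξ * s : ℝ) : ℂ)) / (s : ℂ)) *
      (Complex.exp (-Complex.I * ((η * t : ℝ) : ℂ)) / (t : ℂ))
      = Complex.exp (-Complex.I * ((ξ * s + η * t : ℝ) : ℂ)) * ((((s * t)⁻¹ : ℝ)) : ℂ) := by
    rw [div_mul_div_comm, ← Complex.exp_add]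
    push_cast
    rw [div_eq_mul_inv]
    ring_nf
  rw [hprod, max_eq_left hs, max_eq_left ht, mul_comm, Complex.re_ofReal_mul, expRe]
  rw [div_eq_mul_inv, mul_inv]
  ring

lemma ptwIm (ξ η : ℝ) {s t : ℝ} (hs : 1 ≤ s) (ht : 1 ≤ t) :
    ((Complex.exp (-Complex.I * ((ξ * s : ℝ) : ℂ)) / (s : ℂ)) *
     (Complex.exp (-Complex.I * ((η * t : ℝ) : ℂ)) / (t : ℂ))).im
    = -Real.sin (ξ * s + η * t) / (max s 1 * max t 1) := by
  have hs0 : (0:ℝ) < s := by linarith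
  have ht0 : (0:ℝ) < t := by linarith
  have hprod : (Complex.exp (-Complex.I * ((ξ * s : ℝ) : ℂ)) / (s : ℂ)) *
      (Complex.exp (-Complex.I * ((η * t : ℝ) : ℂ)) / (t : ℂ))
      = Complex.exp (-Complex.I * ((ξ * s + η * t : ℝ) : ℂ)) * ((((s * t)⁻¹ : ℝ)) : ℂ) := by
    rw [div_mul_div_comm, ← Complex.exp_add]
    push_cast
    rw [div_eq_mul_inv]
    ring_nf
  rw [hprod, max_eq_left hs, max_eq_left ht, mul_comm, Complex.im_ofReal_mul, expIm]
  rw [div_eq_mul_inv, mul_inv]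
  ring

lemma IocIcc (g : ℝ × ℝ → ℝ) (b d : ℝ) :
    (∫ p in Ioc (1:ℝ) b ×ˢ Ioc (1:ℝ) d, g p) = ∫ p in Icc (1:ℝ) b ×ˢ Icc (1:ℝ) d, g p := by
  rw [MeasureTheory.Measure.volume_eq_prod, ← Measure.prod_restrict, ← Measure.prod_restrict,
    Measure.restrict_congr_set (Ioc_ae_eq_Icc (a := (1:ℝ)) (b := b)),
    Measure.restrict_congr_set (Ioc_ae_eq_Icc (a := (1:ℝ)) (b := d))]

lemma valueRe (ξ η b d : ℝ) (hb : 1 ≤ b) (hd : 1 ≤ d) :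
    ((∫ s in (1:ℝ)..b, Complex.exp (-Complex.I * ((ξ * s : ℝ) : ℂ)) / (s : ℂ)) *
     (∫ s in (1:ℝ)..d, Complex.exp (-Complex.I * ((η * s : ℝ) : ℂ)) / (s : ℂ))).re
    = ∫ p in Icc (1:ℝ) b ×ˢ Icc (1:ℝ) d,
        Real.cos (ξ * p.1 + η * p.2) / (max p.1 1 * max p.2 1) := by
  rw [prodIntegral ξ η b d hb hd]
  have hcomm := Complex.reCLM.integral_comp_comm (kernIntOn ξ η b d)
  simp only [Complex.reCLM_apply] at hcomm
  rw [← hcomm, IocIcc]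
  apply setIntegral_congr_fun (measurableSet_Icc.prod measurableSet_Icc)
  intro p hp
  exact ptwRe ξ η hp.1.1 hp.2.1

lemma valueIm (ξ η b d : ℝ) (hb : 1 ≤ b) (hd : 1 ≤ d) :
    ((∫ s in (1:ℝ)..b, Complex.exp (-Complex.I * ((ξ * s : ℝ) : ℂ)) / (s : ℂ)) *
     (∫ s in (1:ℝ)..d, Complex.exp (-Complex.I * ((η * s : ℝ) : ℂ)) / (s : ℂ))).im
    = ∫ p in Icc (1:ℝ) b ×ˢ Icc (1:ℝ) d,
        -Real.sin (ξ * p.1 + η * p.2) / (max p.1 1 * max p.2 1) := by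
  rw [prodIntegral ξ η b d hb hd]
  have hcomm := Complex.imCLM.integral_comp_comm (kernIntOn ξ η b d)
  simp only [Complex.imCLM_apply] at hcomm
  rw [← hcomm, IocIcc]
  apply setIntegral_congr_fun (measurableSet_Icc.prod measurableSet_Icc)
  intro p hp
  exact ptwIm ξ η hp.1.1 hp.2.1

-- the component functions of the integrand are of the lemB form
lemma reForm (ξ η : ℝ) :
    (fun s t => ((((if 1 ≤ s ∧ 1 ≤ t then s⁻¹ * t⁻¹ else 0 : ℝ)) : ℂ) *
        fourierKernel ξ η s t).re)
    = fun s t => if 1 ≤ s ∧ 1 ≤ t then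
        Real.cos (ξ * s + η * t) / (max s 1 * max t 1) else 0 := by
  funext s t
  by_cases h : 1 ≤ s ∧ 1 ≤ t
  · rw [if_pos h, if_pos h, fourierKernel]
    rw [Complex.re_ofReal_mul, expRe, max_eq_left h.1, max_eq_left h.2]
    rw [div_eq_mul_inv, mul_inv]
    ring
  · rw [if_neg h, if_neg h]
    simp

lemma imForm (ξ η : ℝ) :
    (fun s t => ((((if 1 ≤ s ∧ 1 ≤ t then s⁻¹ * t⁻¹ else 0 : ℝ)) : ℂ) *
        fourierKernel ξ η s t).im)
    = fun s t => if 1 ≤ s ∧ 1 ≤ t then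
        -Real.sin (ξ * s + η * t) / (max s 1 * max t 1) else 0 := by
  funext s t
  by_cases h : 1 ≤ s ∧ 1 ≤ t
  · rw [if_pos h, if_pos h, fourierKernel]
    rw [Complex.im_ofReal_mul, expIm, max_eq_left h.1, max_eq_left h.2]
    rw [div_eq_mul_inv, mul_inv]
    ring
  · rw [if_neg h, if_neg h]
    simp

lemma contRe (ξ η : ℝ) : Continuous fun p : ℝ × ℝ =>
    Real.cos (ξ * p.1 + η * p.2) / (max p.1 1 * max p.2 1) := by
  apply Continuous.div
  · fun_prop
  · fun_prop
  · intro p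
    have h1 : (1:ℝ) ≤ max p.1 1 := le_max_right _ _
    have h2 : (1:ℝ) ≤ max p.2 1 := le_max_right _ _
    nlinarith

lemma contIm (ξ η : ℝ) : Continuous fun p : ℝ × ℝ =>
    -Real.sin (ξ * p.1 + η * p.2) / (max p.1 1 * max p.2 1) := by
  apply Continuous.div
  · fun_prop
  · fun_prop
  · intro p
    have h1 : (1:ℝ) ≤ max p.1 1 := le_max_right _ _
    have h2 : (1:ℝ) ≤ max p.2 1 := le_max_right _ _
    nlinarith

/-- Example: for `f(x,y) = (1/x)(1/y)` on `x,y ≥ 1` (and `0` otherwise) and `ξ ≠ 0`,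
`η ≠ 0`, one has `ℱ(f)(ξ,η) = Γ(0,iξ)Γ(0,iη)`, i.e. the KP-Fourier transform equals the
product of the improper integrals `∫_1^∞ e^{−iξt}/t dt` and `∫_1^∞ e^{−iηt}/t dt`. -/
theorem stmt15 (ξ η : ℝ) (hξ : ξ ≠ 0) (hη : η ≠ 0) :
    ∃ Iξ Iη : ℂ,
      Tendsto (fun b : ℝ =>
          ∫ s in (1:ℝ)..b, Complex.exp (-Complex.I * ((ξ * s : ℝ) : ℂ)) / (s : ℂ))
        atTop (𝓝 Iξ) ∧
      Tendsto (fun b : ℝ =>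
          ∫ s in (1:ℝ)..b, Complex.exp (-Complex.I * ((η * s : ℝ) : ℂ)) / (s : ℂ))
        atTop (𝓝 Iη) ∧
      HasKPFourier (fun x y => if 1 ≤ x ∧ 1 ≤ y then x⁻¹ * y⁻¹ else 0) ξ η (Iξ * Iη) := by
  obtain ⟨Iξ, hIξ⟩ := lemA ξ hξ
  obtain ⟨Iη, hIη⟩ := lemA η hη
  refine ⟨Iξ, Iη, hIξ, hIη, ?_⟩
  intro ε hε
  have hmul : Tendsto (fun p : ℝ × ℝ =>
      (∫ s in (1:ℝ)..p.1, Complex.exp (-Complex.I * ((ξ * s : ℝ) : ℂ)) / (s : ℂ)) *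
      (∫ s in (1:ℝ)..p.2, Complex.exp (-Complex.I * ((η * s : ℝ) : ℂ)) / (s : ℂ)))
      (atTop ×ˢ atTop) (𝓝 (Iξ * Iη)) :=
    (hIξ.comp tendsto_fst).mul (hIη.comp tendsto_snd)
  have hev := Metric.tendsto_nhds.mp hmul ε hε
  rw [Filter.eventually_prod_iff] at hev
  obtain ⟨pa, hpa, pb, hpb, hab⟩ := hev
  obtain ⟨M₁, hM₁⟩ := Filter.eventually_atTop.mp hpa
  obtain ⟨M₂, hM₂⟩ := Filter.eventually_atTop.mp hpb
  refine ⟨max (max M₁ M₂) 2, ?_⟩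
  intro a b c d haM hbM hcM hdM
  have h2M : (2:ℝ) ≤ max (max M₁ M₂) 2 := le_max_right _ _
  have hb1 : (1:ℝ) ≤ b := by linarith [le_trans h2M hbM]
  have hd1 : (1:ℝ) ≤ d := by linarith [le_trans h2M hdM]
  have ha1 : a < 1 := by linarith
  have hc1 : c < 1 := by linarith
  refine ⟨(∫ s in (1:ℝ)..b, Complex.exp (-Complex.I * ((ξ * s : ℝ) : ℂ)) / (s : ℂ)) *
      (∫ s in (1:ℝ)..d, Complex.exp (-Complex.I * ((η * s : ℝ) : ℂ)) / (s : ℂ)),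
    ⟨?_, ?_⟩, ?_⟩
  · have h := lemB (fun s t => Real.cos (ξ * s + η * t) / (max s 1 * max t 1))
      (contRe ξ η) a b c d ha1 hb1 hc1 hd1
    rw [← valueRe ξ η b d hb1 hd1, ← reForm ξ η] at h
    exact h
  · have h := lemB (fun s t => -Real.sin (ξ * s + η * t) / (max s 1 * max t 1))
      (contIm ξ η) a b c d ha1 hb1 hc1 hd1
    rw [← valueIm ξ η b d hb1 hd1, ← imForm ξ η] at h
    exact h
  · have hb' : M₁ ≤ b := le_trans (le_trans (le_max_left _ _) (le_max_left _ _)) hbM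
    have hd' : M₂ ≤ d := le_trans (le_trans (le_max_right _ _) (le_max_left _ _)) hdM
    have := hab (hM₁ b hb') (hM₂ d hd')
    rw [dist_eq_norm] at this
    exact this
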